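/- Let a_1,...,a_r be elements of a commutative ℚ-algebra that are nilpotent. If ∑_{i=1}^r a_i^j = 0 for all j ≥ 2, then ∏_{i=1}^r (1 + a_i) = exp(∑_{i=1}^r a_i). -/

import Mathlib

/-!
STATEMENT 1. Let `a_1, …, a_r` be nilpotent elements of a commutative `ℚ`-algebra.
If `∑ i, a i ^ j = 0` for all `j ≥ 2`, then `∏ i, (1 + a i) = exp (∑ i, a i)`,
where for a nilpotent element `x` (say `x ^ N = 0`) the exponential is the finite sum
`∑_{k < N} x ^ k / k!` (this value is independent of the choice of such an `N`).
-/

/-- The truncated exponential `∑_{k < N} x^k / k!` of an element of a `ℚ`-algebra. -/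
def truncExp {A : Type*} [CommRing A] [Algebra ℚ A] (x : A) (N : ℕ) : A :=
  ∑ k ∈ Finset.range N, ((k.factorial : ℚ)⁻¹) • x ^ k

open Finset MvPolynomial in
theorem prod_one_add_eq_exp_sum_of_power_sums_vanish
    {A : Type*} [CommRing A] [Algebra ℚ A] (r : ℕ) (a : Fin r → A)
    (hnil : ∀ i, IsNilpotent (a i))
    (hp : ∀ j : ℕ, 2 ≤ j → (∑ i, a i ^ j : A) = 0) :
    ∀ N : ℕ, (∑ i, a i) ^ N = 0 →
      (∏ i, (1 + a i) : A) = truncExp (∑ i, a i) N := by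
  intro N hN
  set s : A := ∑ i, a i with hs
  -- elementary symmetric functions of the `a i`
  set E : ℕ → A := fun k => ∑ t ∈ powersetCard k (univ : Finset (Fin r)), ∏ i ∈ t, a i with hE
  have hE0 : E 0 = 1 := by simp [hE]
  have hEbig : ∀ k, r < k → E k = 0 := by
    intro k hk
    have h0 : powersetCard k (univ : Finset (Fin r)) = ∅ :=
      powersetCard_eq_empty.mpr (by simpa using hk)
    simp [hE, h0]
  -- Newton's identity specialized: `(k+1) • E (k+1) = E k * s`
  have newton : ∀ k : ℕ, ((k + 1 : ℕ) : A) * E (k + 1) = E k * s := by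
    intro k
    have h := congrArg (aeval a) (MvPolynomial.mul_esymm_eq_sum (Fin r) ℚ (k + 1))
    have haesymm : ∀ m : ℕ, aeval a (esymm (Fin r) ℚ m) = E m := by
      intro m
      simp [esymm, hE, map_sum, map_prod]
    have haepsum : ∀ m : ℕ, aeval a (psum (Fin r) ℚ m) = ∑ i, a i ^ m := by
      intro m
      simp [psum, map_sum]
    rw [map_mul, map_mul, map_sum] at h
    simp only [map_mul, map_pow, map_neg, map_one, map_natCast, haesymm] at h
    -- evaluate the sum: only the `(k, 1)` term survives
    have hsum : ∑ x ∈ {p ∈ antidiagonal (k + 1) | p.1 < k + 1},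
        (-1 : A) ^ x.1 * E x.1 * aeval a (psum (Fin r) ℚ x.2)
        = (-1 : A) ^ k * E k * s := by
      rw [Finset.sum_eq_single_of_mem (k, 1)]
      · rw [haepsum 1]
        simp [hs]
      · simp [Finset.mem_filter, Finset.mem_antidiagonal]
      · rintro ⟨i, j⟩ hmem hne
        simp only [Finset.mem_filter, Finset.HasAntidiagonal.mem_antidiagonal] at hmem
        obtain ⟨hij, hilt⟩ := hmem
        have hj2 : 2 ≤ j := by
          by_contra hcon
          push_neg at hcon
          have hj1 : j = 1 := by omega
          subst hj1
          have hik : i = k := by omega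
          subst hik
          exact hne rfl
        simp only [haepsum]
        rw [hp j hj2, mul_zero]
    rw [hsum] at h
    rw [h]
    have h2 : (-1 : A) ^ (k + 1 + 1) * ((-1) ^ k * E k * s)
        = ((-1 : A) ^ (k + 1 + 1) * (-1) ^ k) * (E k * s) := by ring
    rw [h2, ← pow_add, show k + 1 + 1 + k = 2 * (k + 1) by ring, pow_mul, neg_one_sq,
      one_pow, one_mul]
  -- `s ^ k = k! • E k`
  have key : ∀ k : ℕ, s ^ k = (k.factorial : ℚ) • E k := by
    intro k
    induction k with
    | zero => simp [hE0]
    | succ k ih =>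
      have h1 : E k * s = ((k + 1 : ℕ) : ℚ) • E (k + 1) := by
        rw [← newton k]
        rw [← nsmul_eq_mul, ← Nat.cast_smul_eq_nsmul ℚ]
      calc s ^ (k + 1) = s ^ k * s := by rw [pow_succ]
        _ = ((k.factorial : ℚ) • E k) * s := by rw [ih]
        _ = (k.factorial : ℚ) • (E k * s) := by rw [smul_mul_assoc]
        _ = (k.factorial : ℚ) • (((k + 1 : ℕ) : ℚ) • E (k + 1)) := by rw [h1]
        _ = ((k + 1).factorial : ℚ) • E (k + 1) := by
            rw [smul_smul, Nat.factorial_succ]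
            push_cast
            ring_nf
  -- each term of truncExp equals `E k`
  have hterm : ∀ k : ℕ, ((k.factorial : ℚ)⁻¹) • s ^ k = E k := by
    intro k
    rw [key k, smul_smul, inv_mul_cancel₀ (by exact_mod_cast k.factorial_ne_zero), one_smul]
  -- `E k = 0` for `k ≥ N`
  have hEN : ∀ k, N ≤ k → E k = 0 := by
    intro k hk
    rw [← hterm k]
    have : s ^ k = 0 := by
      obtain ⟨m, rfl⟩ := Nat.exists_eq_add_of_le hk
      rw [pow_add, hN, zero_mul]
    rw [this, smul_zero]
  -- expand the product
  have hprod : (∏ i, (1 + a i) : A) = ∑ k ∈ range (r + 1), E k := by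
    have := Finset.prod_add a (fun _ => (1 : A)) (univ : Finset (Fin r))
    simp only [prod_const_one, mul_one] at this
    calc (∏ i, (1 + a i) : A) = ∏ i, (a i + 1) := by simp [add_comm]
      _ = ∑ t ∈ (univ : Finset (Fin r)).powerset, ∏ i ∈ t, a i := this
      _ = ∑ k ∈ range (r + 1), E k := by
          rw [Finset.sum_powerset]
          simp [hE]
  rw [hprod, truncExp]
  have hR : ∑ k ∈ range N, ((k.factorial : ℚ)⁻¹) • s ^ k = ∑ k ∈ range N, E k :=
    Finset.sum_congr rfl fun k _ => hterm k
  rw [hR]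
  -- both sums equal the sum over `range (max (r+1) N)`
  rw [show (∑ k ∈ range (r + 1), E k) = ∑ k ∈ range (max (r + 1) N), E k from
      Finset.sum_subset (by simp [range_subset]; intros; omega) (fun k _ hk => hEbig k (by
        simp only [mem_range, not_lt] at hk ⊢; omega)),
    show (∑ k ∈ range N, E k) = ∑ k ∈ range (max (r + 1) N), E k from
      Finset.sum_subset (by simp [range_subset]; intros; omega) (fun k _ hk => hEN k (by
        simp only [mem_range, not_lt] at hk ⊢; omega))]
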